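/- arXiv:1701.09070 — 3 statements merged into one kernel-verified Lean document; each statement's English description precedes it below -/
import Mathlib

section
/- The set of points (x,y) in the open triangle Δ = {(x,y) ∈ ℝ² : 1 > x > y > 0} for which there exists a sequence i : ℕ → {0,1} with (x,y) ∈ Δ_{(e,12,12)}(i₁,…,iₙ) for every n ≥ 1 and lim_{n→∞} (1/n)·#{k ≤ n : i_k = 1} = 1/2, has two-dimensional Lebesgue measure zero. (This is the key step showing that the Minkowski question mark analog Φ(e,12,12) is singular.) -/
open Matrix MeasureTheory Filter Set Pointwise

noncomputable section

/-- Projection π(a,b,c) = (b/a, c/a). -/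
def projPt (v : Fin 3 → ℝ) : ℝ × ℝ := (v 1 / v 0, v 2 / v 0)

def Vmat : Matrix (Fin 3) (Fin 3) ℝ := !![1,1,1; 0,1,1; 0,0,1]

def prodSeq (C : Fin 2 → Matrix (Fin 3) (Fin 3) ℝ) (i : ℕ → Fin 2) :
    ℕ → Matrix (Fin 3) (Fin 3) ℝ
  | 0 => 1
  | n + 1 => prodSeq C i n * C (i (n + 1))

/-- The subtriangle: convex hull of the π-images of the columns of V·C_{i₁}⋯C_{iₙ}. -/
def subTri (C : Fin 2 → Matrix (Fin 3) (Fin 3) ℝ) (i : ℕ → Fin 2) (n : ℕ) :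
    Set (ℝ × ℝ) :=
  convexHull ℝ (Set.range fun j : Fin 3 => projPt fun k => (Vmat * prodSeq C i n) k j)

/-- The Farey matrices F₀(e,12,12), F₁(e,12,12). -/
def Fe1212 : Fin 2 → Matrix (Fin 3) (Fin 3) ℝ :=
  ![!![0,0,1; 0,1,0; 1,0,1], !![0,1,1; 1,0,0; 0,0,1]]

lemma tri_vol (p0 p1 p2 : ℝ × ℝ) :
    volume (convexHull ℝ {p0, p1, p2}) ≤
      ENNReal.ofReal |(p1.1-p0.1)*(p2.2-p0.2) - (p2.1-p0.1)*(p1.2-p0.2)| := by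
  set L : (ℝ × ℝ) →ₗ[ℝ] (ℝ × ℝ) :=
    Matrix.toLin (Module.Basis.finTwoProd ℝ) (Module.Basis.finTwoProd ℝ)
      !![p1.1-p0.1, p2.1-p0.1; p1.2-p0.2, p2.2-p0.2] with hL
  have hLapp : ∀ w : ℝ × ℝ,
      L w = ((p1.1-p0.1)*w.1 + (p2.1-p0.1)*w.2, (p1.2-p0.2)*w.1 + (p2.2-p0.2)*w.2) := by
    intro w; rw [hL, Matrix.toLin_finTwoProd_apply]
  set K : Set (ℝ × ℝ) := Icc (0:ℝ) 1 ×ˢ Icc (0:ℝ) 1 with hK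
  have hconv : Convex ℝ (p0 +ᵥ (L '' K)) :=
    Convex.vadd (((convex_Icc (0:ℝ) 1).prod (convex_Icc (0:ℝ) 1)).linear_image L) _
  have hmem : ∀ w : ℝ × ℝ, w ∈ K → p0 + L w ∈ p0 +ᵥ (L '' K) := by
    intro w hw
    exact Set.vadd_mem_vadd_set (Set.mem_image_of_mem _ hw)
  have hsub : convexHull ℝ {p0, p1, p2} ⊆ p0 +ᵥ (L '' K) := by
    refine convexHull_min ?_ hconv
    intro q hq
    simp only [Set.mem_insert_iff, Set.mem_singleton_iff] at hq
    rcases hq with h | h | h <;> rw [h]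
    · have := hmem 0 (by constructor <;> constructor <;> norm_num)
      have h2 : p0 + L 0 = p0 := by simp
      rwa [h2] at this
    · have := hmem (1,0) (by constructor <;> constructor <;> norm_num)
      have h2 : p0 + L (1,0) = p1 := by
        rw [hLapp]; simp [Prod.ext_iff]
      rwa [h2] at this
    · have := hmem (0,1) (by constructor <;> constructor <;> norm_num)
      have h2 : p0 + L (0,1) = p2 := by
        rw [hLapp]; simp [Prod.ext_iff]
      rwa [h2] at this
  have hdet : LinearMap.det L = (p1.1-p0.1)*(p2.2-p0.2) - (p2.1-p0.1)*(p1.2-p0.2) := by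
    rw [hL, LinearMap.det_toLin, Matrix.det_fin_two]
    simp
  calc volume (convexHull ℝ {p0, p1, p2}) ≤ volume (p0 +ᵥ (L '' K)) := measure_mono hsub
    _ = volume (L '' K) := by rw [measure_vadd]
    _ = ENNReal.ofReal |LinearMap.det L| * volume K := Measure.addHaar_image_linearMap volume L K
    _ ≤ ENNReal.ofReal |(p1.1-p0.1)*(p2.2-p0.2) - (p2.1-p0.1)*(p1.2-p0.2)| := by
        have hK1 : volume K = 1 := by
          rw [hK, Measure.volume_eq_prod, Measure.prod_prod, Real.volume_Icc]
          norm_num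
        rw [hK1, mul_one, hdet]







lemma fin2cases (d : Fin 2) : d = 0 ∨ d = 1 := by
  fin_cases d
  · exact Or.inl rfl
  · exact Or.inr rfl

/-- one step on the top-row triple -/
def stp (d : Fin 2) (p : ℝ × ℝ × ℝ) : ℝ × ℝ × ℝ :=
  if d = 0 then (p.2.2, p.2.1, p.1 + p.2.2) else (p.2.1, p.1, p.1 + p.2.2)

lemma stp_zero (p : ℝ × ℝ × ℝ) : stp 0 p = (p.2.2, p.2.1, p.1 + p.2.2) := rfl
lemma stp_one (p : ℝ × ℝ × ℝ) : stp 1 p = (p.2.1, p.1, p.1 + p.2.2) := rfl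

def rv (i : ℕ → Fin 2) (n : ℕ) : ℝ × ℝ × ℝ :=
  ((Vmat * prodSeq Fe1212 i n) 0 0, (Vmat * prodSeq Fe1212 i n) 0 1,
    (Vmat * prodSeq Fe1212 i n) 0 2)

lemma rv_zero (i : ℕ → Fin 2) : rv i 0 = (1,1,1) := by
  simp [rv, prodSeq, Vmat]

lemma row_mul_F0 (M : Matrix (Fin 3) (Fin 3) ℝ) (j : Fin 3) :
    (M * Fe1212 0) 0 j = ![M 0 2, M 0 1, M 0 0 + M 0 2] j := by
  fin_cases j <;>
    simp [Matrix.mul_apply, Fe1212, Fin.sum_univ_three, Matrix.vecHead, Matrix.vecTail]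

lemma row_mul_F1 (M : Matrix (Fin 3) (Fin 3) ℝ) (j : Fin 3) :
    (M * Fe1212 1) 0 j = ![M 0 1, M 0 0, M 0 0 + M 0 2] j := by
  fin_cases j <;>
    simp [Matrix.mul_apply, Fe1212, Fin.sum_univ_three, Matrix.vecHead, Matrix.vecTail]

lemma rv_succ (i : ℕ → Fin 2) (n : ℕ) : rv i (n+1) = stp (i (n+1)) (rv i n) := by
  have hM : ∀ j, (Vmat * prodSeq Fe1212 i (n+1)) 0 j =
      ((Vmat * prodSeq Fe1212 i n) * Fe1212 (i (n+1))) 0 j := by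
    intro j
    rw [show prodSeq Fe1212 i (n+1) = prodSeq Fe1212 i n * Fe1212 (i (n+1)) from rfl,
      Matrix.mul_assoc]
  rcases fin2cases (i (n+1)) with h | h <;> rw [h] at hM ⊢
  · unfold rv
    rw [hM 0, hM 1, hM 2, row_mul_F0, row_mul_F0, row_mul_F0, stp_zero]
    simp
  · unfold rv
    rw [hM 0, hM 1, hM 2, row_mul_F1, row_mul_F1, row_mul_F1, stp_one]
    simp

def good (p : ℝ × ℝ × ℝ) : Prop :=
  0 < p.1 ∧ 0 < p.2.1 ∧ p.1 ≤ p.2.2 ∧ p.2.1 ≤ p.2.2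

lemma good_stp (d : Fin 2) (p : ℝ × ℝ × ℝ) (h : good p) : good (stp d p) := by
  obtain ⟨h1, h2, h3, h4⟩ := h
  rcases fin2cases d with hd | hd <;> subst hd
  · rw [stp_zero]
    refine ⟨?_, ?_, ?_, ?_⟩ <;> dsimp <;> linarith
  · rw [stp_one]
    refine ⟨?_, ?_, ?_, ?_⟩ <;> dsimp <;> linarith

lemma good_rv (i : ℕ → Fin 2) (n : ℕ) : good (rv i n) := by
  induction n with
  | zero => rw [rv_zero]; refine ⟨?_, ?_, ?_, ?_⟩ <;> norm_num
  | succ n ih => rw [rv_succ]; exact good_stp _ _ ih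

lemma det_F (d : Fin 2) : (Fe1212 d).det = -1 := by
  rcases fin2cases d with h | h <;> subst h <;>
    · simp only [Fe1212, Matrix.det_fin_three]
      simp [Matrix.vecHead, Matrix.vecTail] <;> norm_num

lemma det_VP (i : ℕ → Fin 2) (n : ℕ) :
    (Vmat * prodSeq Fe1212 i n).det = (-1 : ℝ)^n := by
  induction n with
  | zero =>
    show (Vmat * 1).det = _
    rw [Matrix.mul_one]
    simp only [Vmat, Matrix.det_fin_three]
    simp [Matrix.vecHead, Matrix.vecTail] <;> norm_num
  | succ n ih =>
    rw [show prodSeq Fe1212 i (n+1) = prodSeq Fe1212 i n * Fe1212 (i (n+1)) from rfl,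
      ← Matrix.mul_assoc, Matrix.det_mul, ih, det_F]
    ring
lemma keyineq (a b c : ℝ) (ha : 0 < a) (hb : 0 < b) (hac : a ≤ c) (hbc : b ≤ c) :
    50*a*c*(4*a+7*c+2*b) + 25*c^2*(6*a+4*c+3*b) ≤ 33*(a+c)^2*(3*a+2*b+4*c) := by
  nlinarith [mul_nonneg ha.le (sq_nonneg (c - 2*a)), mul_nonneg (sub_nonneg.2 hac) (sq_nonneg (c - 2*a)),
    mul_nonneg (sub_nonneg.2 hac) (sq_nonneg (c - a)), mul_nonneg ha.le (sq_nonneg (c - a)),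
    mul_nonneg (sub_nonneg.2 hbc) (sq_nonneg (c - 2*a)), mul_nonneg (sub_nonneg.2 hbc) (sq_nonneg (c - a)),
    mul_nonneg (sub_nonneg.2 hbc) (sq_nonneg a), mul_nonneg hb.le (sq_nonneg (c - 2*a)),
    mul_nonneg hb.le (sq_nonneg (c - a)), mul_nonneg hb.le (sq_nonneg a),
    mul_nonneg (mul_nonneg (sub_nonneg.2 hac) (sub_nonneg.2 hac)) (sub_nonneg.2 hac),
    mul_nonneg (mul_nonneg ha.le (sub_nonneg.2 hac)) (sub_nonneg.2 hbc),
    mul_nonneg (mul_nonneg ha.le ha.le) (sub_nonneg.2 hac),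
    mul_pos (mul_pos ha ha) ha, mul_pos (mul_pos ha hb) ha]

/-- The potential function. -/
def Gp (p : ℝ × ℝ × ℝ) : ℝ :=
  (4*p.2.2 + 3*p.1 + 2*p.2.1) / (4*p.1*p.2.1*p.2.2*p.2.2)

lemma Gp_nonneg (p : ℝ × ℝ × ℝ) (h : good p) : 0 ≤ Gp p := by
  obtain ⟨h1, h2, h3, h4⟩ := h
  have hc : 0 < p.2.2 := lt_of_lt_of_le h1 h3
  apply div_nonneg <;> positivity

lemma one_div_le_Gp (p : ℝ × ℝ × ℝ) (h : good p) :
    1 / (p.1 * p.2.1 * p.2.2) ≤ Gp p := by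
  obtain ⟨h1, h2, h3, h4⟩ := h
  have hc : 0 < p.2.2 := lt_of_lt_of_le h1 h3
  rw [Gp, div_le_div_iff₀ (by positivity) (by positivity)]
  nlinarith [mul_pos (mul_pos h1 h2) hc, mul_pos (mul_pos (mul_pos h1 h2) hc) hc,
    mul_pos (mul_pos (mul_pos h1 h1) h2) hc, mul_pos (mul_pos (mul_pos h1 h2) h2) hc]

lemma Gp_step (p : ℝ × ℝ × ℝ) (h : good p) :
    Gp (stp 0 p) + (1/2) * Gp (stp 1 p) ≤ (33/50) * Gp p := by
  obtain ⟨h1, h2, h3, h4⟩ := h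
  set a := p.1; set b := p.2.1; set c := p.2.2
  have hc : 0 < c := lt_of_lt_of_le h1 h3
  have hac : 0 < a + c := by linarith
  have key := keyineq a b c h1 h2 h3 h4
  have big : (33/50) * Gp p - (Gp (stp 0 p) + (1/2) * Gp (stp 1 p)) =
      (33*(a+c)^2*(3*a+2*b+4*c) - (50*a*c*(4*a+7*c+2*b) + 25*c^2*(6*a+4*c+3*b))) /
        (200*a*b*c^2*(a+c)^2) := by
    rw [stp_zero, stp_one, Gp, Gp, Gp]
    have ha' : p.1 ≠ 0 := h1.ne'
    have hb' : p.2.1 ≠ 0 := h2.ne'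
    have hc' : p.2.2 ≠ 0 := hc.ne'
    have hac' : p.1 + p.2.2 ≠ 0 := hac.ne'
    field_simp
    ring
  have hpos : 0 ≤ (33*(a+c)^2*(3*a+2*b+4*c) - (50*a*c*(4*a+7*c+2*b) + 25*c^2*(6*a+4*c+3*b))) /
      (200*a*b*c^2*(a+c)^2) := by
    apply div_nonneg (by linarith) (by positivity)
  linarith

/-- triple attached to a word, read with the first letter acting last -/
def trip : ∀ {n : ℕ}, (Fin n → Fin 2) → ℝ × ℝ × ℝ
  | 0, _ => (1,1,1)
  | _+1, w => stp (w 0) (trip (fun j => w j.succ))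

def ones {n : ℕ} (w : Fin n → Fin 2) : ℕ := ∑ j, (w j : ℕ)

lemma trip_good {n : ℕ} (w : Fin n → Fin 2) : good (trip w) := by
  induction n with
  | zero =>
    refine ⟨?_, ?_, ?_, ?_⟩ <;> simp [trip]
  | succ n ih => exact good_stp _ _ (ih _)

lemma trip_cons {n : ℕ} (d : Fin 2) (w : Fin n → Fin 2) :
    trip (Fin.cons d w) = stp d (trip w) := by
  simp only [trip, Fin.cons_zero, Fin.cons_succ]

lemma ones_cons {n : ℕ} (d : Fin 2) (w : Fin n → Fin 2) :
    ones (Fin.cons d w) = (d : ℕ) + ones w := by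
  rw [ones, Fin.sum_univ_succ]
  simp [ones, Fin.cons_succ]

lemma trip_eq_rv (i : ℕ → Fin 2) (n : ℕ) :
    trip (fun j : Fin n => i (n - (j : ℕ))) = rv i n := by
  induction n with
  | zero => rw [rv_zero]; rfl
  | succ n ih =>
    rw [rv_succ, ← ih]
    simp only [trip, Fin.val_succ, Fin.val_zero]
    have harg : (fun j : Fin n => i (n + 1 - ((j : ℕ) + 1))) =
        fun j : Fin n => i (n - (j : ℕ)) := by
      funext j
      congr 1
      omega
    rw [harg]
    norm_num

lemma subTri_vol (i : ℕ → Fin 2) (n : ℕ) :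
    volume (subTri Fe1212 i n) ≤
      ENNReal.ofReal (1 / ((rv i n).1 * (rv i n).2.1 * (rv i n).2.2)) := by
  obtain ⟨ha, hb, hac, hbc⟩ := good_rv i n
  set M := Vmat * prodSeq Fe1212 i n with hM
  have e1 : (rv i n).1 = M 0 0 := rfl
  have e2 : (rv i n).2.1 = M 0 1 := rfl
  have e3 : (rv i n).2.2 = M 0 2 := rfl
  rw [e1] at ha hac; rw [e2] at hb hbc; rw [e3] at hac hbc
  have hc : (0:ℝ) < M 0 2 := lt_of_lt_of_le ha hac
  set f : Fin 3 → ℝ × ℝ := fun j => projPt fun k => M k j with hf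
  have hrange : (Set.range f) = {f 0, f 1, f 2} := by
    ext q
    constructor
    · rintro ⟨j, rfl⟩
      fin_cases j
      · exact Set.mem_insert _ _
      · exact Set.mem_insert_of_mem _ (Set.mem_insert _ _)
      · exact Set.mem_insert_of_mem _ (Set.mem_insert_of_mem _ rfl)
    · intro hq
      rcases hq with h | h | h
      · exact ⟨0, h.symm⟩
      · exact ⟨1, h.symm⟩
      · exact ⟨2, h.symm⟩
  have hsub : subTri Fe1212 i n = convexHull ℝ {f 0, f 1, f 2} := by
    rw [subTri, ← hrange]
  rw [hsub, e1, e2, e3]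
  refine le_trans (tri_vol (f 0) (f 1) (f 2)) (le_of_eq ?_)
  congr 1
  have key : ((f 1).1 - (f 0).1)*((f 2).2 - (f 0).2) - ((f 2).1 - (f 0).1)*((f 1).2 - (f 0).2)
      = M.det / (M 0 0 * M 0 1 * M 0 2) := by
    simp only [hf, projPt]
    rw [Matrix.det_fin_three]
    field_simp
    ring
  rw [key, abs_div, hM, det_VP]
  rw [abs_pow, abs_neg, abs_one, one_pow]
  rw [abs_of_pos (by positivity)]

def Wsum (n : ℕ) : ℝ := ∑ w : Fin n → Fin 2, (1/2 : ℝ)^(ones w) * Gp (trip w)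

lemma Wsum_succ (n : ℕ) : Wsum (n+1) ≤ (33/50) * Wsum n := by
  have hsplit : Wsum (n+1) = ∑ p : Fin 2 × (Fin n → Fin 2),
      (1/2 : ℝ)^(ones (Fin.cons p.1 p.2)) * Gp (trip (Fin.cons p.1 p.2)) := by
    rw [Wsum]
    exact (Fintype.sum_equiv (Fin.consEquiv (fun _ : Fin (n+1) => Fin 2))
      (fun p => (1/2:ℝ)^(ones (Fin.cons p.1 p.2)) * Gp (trip (Fin.cons p.1 p.2)))
      (fun w => (1/2:ℝ)^(ones w) * Gp (trip w)) (fun p => rfl)).symm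
  rw [hsplit, Fintype.sum_prod_type, Fin.sum_univ_two, ← Finset.sum_add_distrib,
    show (33/50 : ℝ) * Wsum n = ∑ w : Fin n → Fin 2,
      (33/50) * ((1/2:ℝ)^(ones w) * Gp (trip w)) from (Finset.mul_sum _ _ _)]
  apply Finset.sum_le_sum
  intro w _
  have hstep := Gp_step (trip w) (trip_good w)
  have hpow : (0:ℝ) ≤ (1/2:ℝ)^(ones w) := by positivity
  dsimp only
  rw [ones_cons, ones_cons, trip_cons, trip_cons, Fin.val_zero, Fin.val_one, zero_add,
    pow_add, pow_one]
  nlinarith [mul_le_mul_of_nonneg_left hstep hpow]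

lemma Wsum_le (n : ℕ) : Wsum n ≤ (33/50)^n * (9/4) := by
  induction n with
  | zero =>
    rw [Wsum]
    rw [Fintype.sum_subsingleton _ (fun j : Fin 0 => (0 : Fin 2))]
    norm_num [ones, Gp, trip]
  | succ n ih =>
    calc Wsum (n+1) ≤ (33/50) * Wsum n := Wsum_succ n
      _ ≤ (33/50) * ((33/50)^n * (9/4)) := by
          apply mul_le_mul_of_nonneg_left ih (by norm_num)
      _ = (33/50)^(n+1) * (9/4) := by ring

lemma prodSeq_congr (C : Fin 2 → Matrix (Fin 3) (Fin 3) ℝ) (i i' : ℕ → Fin 2) (n : ℕ)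
    (h : ∀ k, 1 ≤ k → k ≤ n → i k = i' k) : prodSeq C i n = prodSeq C i' n := by
  induction n with
  | zero => rfl
  | succ n ih =>
    show prodSeq C i n * C (i (n+1)) = prodSeq C i' n * C (i' (n+1))
    rw [ih (fun k h1 h2 => h k h1 (h2.trans (Nat.le_succ n))), h (n+1) (by omega) le_rfl]

def extw {n : ℕ} (w : Fin n → Fin 2) : ℕ → Fin 2 :=
  fun k => if h : 1 ≤ k ∧ k ≤ n then w ⟨n - k, by omega⟩ else 0

lemma extw_word {n : ℕ} (w : Fin n → Fin 2) :
    (fun j : Fin n => extw w (n - (j:ℕ))) = w := by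
  funext j
  have hj : (j:ℕ) < n := j.isLt
  simp only [extw]
  rw [dif_pos ⟨by omega, by omega⟩]
  congr 1
  exact Fin.ext (by simp; omega)

lemma ones_eq_card (i : ℕ → Fin 2) (n : ℕ) :
    ones (fun j : Fin n => i (n - (j:ℕ))) =
      ((Finset.range n).filter fun k => i (k+1) = 1).card := by
  have e1 : ones (fun j : Fin n => i (n - (j:ℕ)))
      = ∑ k ∈ Finset.range n, ((i (n - k) : ℕ)) :=
    Fin.sum_univ_eq_sum_range (fun k => ((i (n - k) : ℕ))) n
  have e2 : ∑ k ∈ Finset.range n, ((i (n - k) : ℕ))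
      = ∑ k ∈ Finset.range n, ((i ((n - 1 - k) + 1) : ℕ)) := by
    refine Finset.sum_congr rfl (fun k hk => ?_)
    have := Finset.mem_range.mp hk
    congr 2
    omega
  have e3 : ∑ k ∈ Finset.range n, ((i ((n - 1 - k) + 1) : ℕ))
      = ∑ k ∈ Finset.range n, ((i (k+1) : ℕ)) :=
    Finset.sum_range_reflect (fun k => ((i (k+1) : ℕ))) n
  have e4 : ((Finset.range n).filter fun k => i (k+1) = 1).card
      = ∑ k ∈ Finset.range n, ((i (k+1) : ℕ)) := by
    rw [Finset.card_filter]
    refine Finset.sum_congr rfl (fun k _ => ?_)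
    rcases fin2cases (i (k+1)) with h | h <;> rw [h] <;> simp
  rw [e1, e2, e3, e4]

def SN (N : ℕ) : Set (ℝ × ℝ) :=
  {z : ℝ × ℝ | ∃ i : ℕ → Fin 2, (∀ n : ℕ, 1 ≤ n → z ∈ subTri Fe1212 i n) ∧
    ∀ n : ℕ, N ≤ n → 16 * (((Finset.range n).filter fun k => i (k + 1) = 1).card) ≤ 9 * n}

lemma SN_cover (N n : ℕ) (hNn : N ≤ n) (h1n : 1 ≤ n) :
    volume (SN N) ≤ ENNReal.ofReal ((2:ℝ)^(9*n/16) * ((33/50:ℝ)^n * (9/4))) := by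
  classical
  set Fw : Finset (Fin n → Fin 2) :=
    Finset.filter (fun w : Fin n → Fin 2 => 16 * ones w ≤ 9 * n) Finset.univ with hFw
  have hsub : SN N ⊆ ⋃ w ∈ Fw, subTri Fe1212 (extw w) n := by
    intro z hz
    obtain ⟨i, hmem, hbal⟩ := hz
    refine Set.mem_biUnion (show (fun j : Fin n => i (n - (j:ℕ))) ∈ Fw from ?_) ?_
    · rw [hFw, Finset.mem_filter]
      exact ⟨Finset.mem_univ _, by rw [ones_eq_card]; exact hbal n hNn⟩
    · have hagree : ∀ k, 1 ≤ k → k ≤ n →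
          extw (fun j : Fin n => i (n - (j:ℕ))) k = i k := by
        intro k h1 h2
        simp only [extw]
        rw [dif_pos ⟨h1, h2⟩]
        congr 1
        omega
      have hps : prodSeq Fe1212 (extw (fun j : Fin n => i (n - (j:ℕ)))) n
          = prodSeq Fe1212 i n := prodSeq_congr _ _ _ n hagree
      show z ∈ subTri Fe1212 (extw (fun j : Fin n => i (n - (j:ℕ)))) n
      rw [subTri, hps]
      exact hmem n h1n
  have hTw : ∀ w : Fin n → Fin 2, rv (extw w) n = trip w := by
    intro w
    rw [← trip_eq_rv (extw w) n, extw_word]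
  have hterm : ∀ w ∈ Fw, (1:ℝ) / ((trip w).1 * (trip w).2.1 * (trip w).2.2)
      ≤ (2:ℝ)^(9*n/16) * ((1/2:ℝ)^(ones w) * Gp (trip w)) := by
    intro w hw
    have hones : ones w ≤ 9*n/16 := by
      rw [hFw, Finset.mem_filter] at hw
      exact (Nat.le_div_iff_mul_le (by norm_num)).2 (by omega)
    have h1 : (1:ℝ) / ((trip w).1 * (trip w).2.1 * (trip w).2.2) ≤ Gp (trip w) :=
      one_div_le_Gp (trip w) (trip_good w)
    have h2 : Gp (trip w) = (2:ℝ)^(ones w) * ((1/2:ℝ)^(ones w) * Gp (trip w)) := by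
      rw [← mul_assoc, ← mul_pow]
      norm_num
    have h3 : ((2:ℝ)^(ones w)) ≤ (2:ℝ)^(9*n/16) :=
      pow_le_pow_right₀ one_le_two hones
    have h4 : (0:ℝ) ≤ (1/2:ℝ)^(ones w) * Gp (trip w) := by
      have := Gp_nonneg (trip w) (trip_good w)
      positivity
    calc (1:ℝ) / ((trip w).1 * (trip w).2.1 * (trip w).2.2) ≤ Gp (trip w) := h1
      _ = (2:ℝ)^(ones w) * ((1/2:ℝ)^(ones w) * Gp (trip w)) := h2
      _ ≤ (2:ℝ)^(9*n/16) * ((1/2:ℝ)^(ones w) * Gp (trip w)) :=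
          mul_le_mul_of_nonneg_right h3 h4
  have hrsum : ∑ w ∈ Fw, (1:ℝ) / ((trip w).1 * (trip w).2.1 * (trip w).2.2)
      ≤ (2:ℝ)^(9*n/16) * ((33/50:ℝ)^n * (9/4)) := by
    calc ∑ w ∈ Fw, (1:ℝ) / ((trip w).1 * (trip w).2.1 * (trip w).2.2)
        ≤ ∑ w ∈ Fw, (2:ℝ)^(9*n/16) * ((1/2:ℝ)^(ones w) * Gp (trip w)) :=
          Finset.sum_le_sum hterm
      _ ≤ ∑ w : Fin n → Fin 2, (2:ℝ)^(9*n/16) * ((1/2:ℝ)^(ones w) * Gp (trip w)) := by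
          refine Finset.sum_le_sum_of_subset_of_nonneg (Finset.subset_univ _) ?_
          intro w _ _
          have := Gp_nonneg (trip w) (trip_good w)
          positivity
      _ = (2:ℝ)^(9*n/16) * Wsum n := by rw [Wsum, ← Finset.mul_sum]
      _ ≤ (2:ℝ)^(9*n/16) * ((33/50:ℝ)^n * (9/4)) := by
          refine mul_le_mul_of_nonneg_left (Wsum_le n) (by positivity)
  calc volume (SN N) ≤ volume (⋃ w ∈ Fw, subTri Fe1212 (extw w) n) := measure_mono hsub
    _ ≤ ∑ w ∈ Fw, volume (subTri Fe1212 (extw w) n) := measure_biUnion_finset_le _ _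
    _ ≤ ∑ w ∈ Fw, ENNReal.ofReal
          ((1:ℝ) / ((trip w).1 * (trip w).2.1 * (trip w).2.2)) := by
        refine Finset.sum_le_sum (fun w _ => ?_)
        have := subTri_vol (extw w) n
        rwa [hTw w] at this
    _ = ENNReal.ofReal (∑ w ∈ Fw, (1:ℝ) / ((trip w).1 * (trip w).2.1 * (trip w).2.2)) := by
        refine (ENNReal.ofReal_sum_of_nonneg (fun w _ => ?_)).symm
        obtain ⟨h1, h2, h3, h4⟩ := trip_good w
        have hc := lt_of_lt_of_le h1 h3
        exact le_of_lt (div_pos one_pos (mul_pos (mul_pos h1 h2) hc))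
    _ ≤ ENNReal.ofReal ((2:ℝ)^(9*n/16) * ((33/50:ℝ)^n * (9/4))) :=
        ENNReal.ofReal_le_ofReal hrsum

lemma SN_zero (N : ℕ) : volume (SN N) = 0 := by
  set v : ℝ := (volume (SN N)).toReal with hv
  have hvle : ∀ n, N ≤ n → 1 ≤ n → v ≤ (2:ℝ)^(9*n/16) * ((33/50:ℝ)^n * (9/4)) := by
    intro n h1 h2
    exact ENNReal.toReal_le_of_le_ofReal (by positivity) (SN_cover N n h1 h2)
  have hvnn : 0 ≤ v := ENNReal.toReal_nonneg
  have h16 : ∀ n, N ≤ n → 1 ≤ n →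
      v^16 ≤ (9/4:ℝ)^16 * ((512 * (33/50:ℝ)^16)^n) := by
    intro n h1 h2
    have hp : v^16 ≤ ((2:ℝ)^(9*n/16) * ((33/50:ℝ)^n * (9/4)))^16 :=
      pow_le_pow_left₀ hvnn (hvle n h1 h2) 16
    refine le_trans hp ?_
    have e : ((2:ℝ)^(9*n/16) * ((33/50:ℝ)^n * (9/4)))^16
        = (2:ℝ)^((9*n/16)*16) * ((33/50:ℝ)^(16*n) * (9/4:ℝ)^16) := by
      rw [mul_pow, mul_pow, ← pow_mul, ← pow_mul]
      ring_nf
    rw [e]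
    have h2n : (2:ℝ)^((9*n/16)*16) ≤ (2:ℝ)^(9*n) := by
      refine pow_le_pow_right₀ one_le_two ?_
      have := Nat.div_mul_le_self (9*n) 16
      omega
    have e2 : (9/4:ℝ)^16 * ((512 * (33/50:ℝ)^16)^n)
        = (2:ℝ)^(9*n) * ((33/50:ℝ)^(16*n) * (9/4:ℝ)^16) := by
      rw [mul_pow, show (512:ℝ) = 2^9 by norm_num, ← pow_mul, ← pow_mul]
      ring
    rw [e2]
    refine mul_le_mul_of_nonneg_right h2n (by positivity)
  have hρ : (512 * (33/50:ℝ)^16) < 1 := by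
    rw [div_pow, ← mul_div_assoc, div_lt_one (by positivity)]
    norm_num
  have htend : Tendsto (fun n : ℕ => (9/4:ℝ)^16 * ((512 * (33/50:ℝ)^16)^n)) atTop (nhds 0) := by
    have h := tendsto_pow_atTop_nhds_zero_of_lt_one (by positivity) hρ
    simpa using h.const_mul ((9/4:ℝ)^16)
  have hv16 : v^16 ≤ 0 := by
    refine ge_of_tendsto htend ?_
    refine eventually_atTop.2 ⟨max N 1, fun n hn => ?_⟩
    exact h16 n (le_trans (le_max_left _ _) hn) (le_trans (le_max_right _ _) hn)
  have hv0 : v = 0 := by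
    have hz : v^16 = 0 := le_antisymm hv16 (pow_nonneg hvnn 16)
    exact pow_eq_zero_iff (by norm_num) |>.mp hz
  have hfin : volume (SN N) ≠ ⊤ :=
    ne_top_of_le_ne_top ENNReal.ofReal_ne_top (SN_cover N (max N 1) (le_max_left _ _) (le_max_right _ _))
  rcases (ENNReal.toReal_eq_zero_iff _).mp hv0 with h | h
  · exact h
  · exact absurd h hfin

/-- The set of points of the open triangle Δ = {1 > x > y > 0} possessing a normal
Farey (e,12,12) TRIP sequence (frequency of ones tending to 1/2) has Lebesgue measure
zero. -/
theorem stmt16 :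
    volume {z : ℝ × ℝ | (z.2 < z.1 ∧ z.1 < 1 ∧ 0 < z.2) ∧
      ∃ i : ℕ → Fin 2,
        (∀ n : ℕ, 1 ≤ n → z ∈ subTri Fe1212 i n) ∧
        Tendsto
          (fun n : ℕ =>
            (((Finset.range n).filter fun k => i (k + 1) = 1).card : ℝ) / n)
          atTop (nhds (1 / 2))} = 0 := by
  have hsub : {z : ℝ × ℝ | (z.2 < z.1 ∧ z.1 < 1 ∧ 0 < z.2) ∧
      ∃ i : ℕ → Fin 2,
        (∀ n : ℕ, 1 ≤ n → z ∈ subTri Fe1212 i n) ∧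
        Tendsto
          (fun n : ℕ =>
            (((Finset.range n).filter fun k => i (k + 1) = 1).card : ℝ) / n)
          atTop (nhds (1 / 2))} ⊆ ⋃ N : ℕ, SN N := by
    rintro z ⟨_, i, hmem, htend⟩
    have hev : ∀ᶠ n : ℕ in atTop,
        (((Finset.range n).filter fun k => i (k + 1) = 1).card : ℝ) / n < 9/16 :=
      htend.eventually_lt_const (by norm_num)
    obtain ⟨N, hN⟩ := eventually_atTop.mp hev
    refine Set.mem_iUnion.2 ⟨max N 1, i, hmem, ?_⟩
    intro n hn
    have h1 : 1 ≤ n := le_trans (le_max_right _ _) hn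
    have hcard := hN n (le_trans (le_max_left _ _) hn)
    have hnpos : (0:ℝ) < n := by exact_mod_cast h1
    rw [div_lt_iff₀ hnpos] at hcard
    have hr : ((16 * (((Finset.range n).filter fun k => i (k + 1) = 1).card) : ℕ) : ℝ)
        < ((9*n : ℕ) : ℝ) := by push_cast; linarith
    exact_mod_cast hr.le
  refine le_antisymm ?_ zero_le
  calc volume _ ≤ volume (⋃ N : ℕ, SN N) := measure_mono hsub
    _ = 0 := measure_iUnion_null (fun N => SN_zero N)
end
end

section
/- The set of points (x,y) in the open triangle Δ = {(x,y) ∈ ℝ² : 1 > x > y > 0} for which there exists a sequence i : ℕ → {0,1} with (x,y) ∈ Δ_{(e,12,e)}(i₁,…,iₙ) for every n ≥ 1 and lim_{n→∞} (1/n)·#{k ≤ n : i_k = 1} = 1/2, has two-dimensional Lebesgue measure zero. (This is the key step showing that the Minkowski question mark analog Φ(e,12,e) of the degenerate Farey class is singular.) -/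
open Matrix MeasureTheory Filter

noncomputable section

/-- The Farey matrices F₀(e,12,e), F₁(e,12,e). -/
def Fe12e : Fin 2 → Matrix (Fin 3) (Fin 3) ℝ :=
  ![!![0,0,1; 0,1,0; 1,0,1], !![1,0,1; 0,1,0; 0,0,1]]

namespace S17

structure Q where
  a : ℝ
  b : ℝ
  c : ℝ
  d : ℝ

def qstep : Fin 2 → Q → Q
  | 0, q => ⟨q.b, q.a + q.b, q.d, q.c + q.d⟩
  | 1, q => ⟨q.a, q.a + q.b, q.c, q.c + q.d⟩

def q0 : Q := ⟨1,0,0,1⟩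

def quadFrom : Q → (ℕ → Fin 2) → ℕ → Q
  | q, _, 0 => q
  | q, i, n+1 => quadFrom (qstep (i 1) q) (fun k => i (k+1)) n

lemma quadFrom_succ (q : Q) (i : ℕ → Fin 2) (n : ℕ) :
    quadFrom q i (n+1) = qstep (i (n+1)) (quadFrom q i n) := by
  induction n generalizing q i with
  | zero => rfl
  | succ n ih =>
      show quadFrom (qstep (i 1) q) (fun k => i (k+1)) (n+1) = _
      rw [ih]
      rfl

def VM (q : Q) : Matrix (Fin 3) (Fin 3) ℝ :=
  !![q.a+q.c, 1, q.b+q.d; q.c, 1, q.d; q.c, 0, q.d]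

lemma VM_mul (d : Fin 2) (q : Q) : VM q * Fe12e d = VM (qstep d q) := by
  fin_cases d <;>
  · ext i j
    fin_cases i <;> fin_cases j <;>
      simp [VM, Fe12e, qstep, Matrix.mul_apply, Fin.sum_univ_three,
        Matrix.vecHead, Matrix.vecTail] <;> ring_nf

lemma struct (i : ℕ → Fin 2) (n : ℕ) :
    Vmat * prodSeq Fe12e i n = VM (quadFrom q0 i n) := by
  induction n with
  | zero =>
      show Vmat * 1 = _
      rw [mul_one]
      ext i j
      fin_cases i <;> fin_cases j <;>
        simp [Vmat, VM, q0, quadFrom, Matrix.vecHead, Matrix.vecTail]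
  | succ n ih =>
      show Vmat * (prodSeq Fe12e i n * Fe12e (i (n+1))) = _
      rw [← mul_assoc, ih, VM_mul, quadFrom_succ]

/-! ### u dynamics and the Chernoff sum -/

def us : Fin 2 → ℝ × ℝ → ℝ × ℝ
  | 0, u => (u.2, u.1 + u.2)
  | 1, u => (u.1, u.1 + u.2)

def Tsum : ℝ × ℝ → ℕ → ℝ
  | u, 0 => 1 / (u.1 * u.2)
  | u, n+1 => (6/5) * Tsum (us 0 u) n + Tsum (us 1 u) n

def uInv (u : ℝ × ℝ) : Prop := 0 < u.1 ∧ u.1 ≤ u.2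

lemma uInv_us (d : Fin 2) {u : ℝ × ℝ} (h : uInv u) : uInv (us d u) := by
  obtain ⟨h1, h2⟩ := h
  fin_cases d <;> constructor <;> simp [us] <;> linarith

lemma Tsum_nonneg : ∀ (n : ℕ) (u : ℝ × ℝ), uInv u → 0 ≤ Tsum u n := by
  intro n
  induction n with
  | zero =>
      intro u hu
      have h2 : 0 < u.2 := lt_of_lt_of_le hu.1 hu.2
      simp only [Tsum]
      exact le_of_lt (div_pos one_pos (mul_pos hu.1 h2))
  | succ n ih =>
      intro u hu
      have h0 := ih _ (uInv_us 0 hu)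
      have h1 := ih _ (uInv_us 1 hu)
      simp only [Tsum]
      nlinarith

lemma key_ineq {a b : ℝ} (ha : 0 < a) (hab : a ≤ b) :
    (6/5) * ((6/5) * (1/((a+b)*(b+(a+b)))) + 1/(b*(b+(a+b))))
      + ((6/5) * (1/((a+b)*(a+(a+b)))) + 1/(a*(a+(a+b))))
      ≤ (88/75) * (1/(a*b)) := by
  have hb : 0 < b := lt_of_lt_of_le ha hab
  have h1 : 0 < a + b := by linarith
  have h2 : 0 < b + (a+b) := by linarith
  have h3 : 0 < a + (a+b) := by linarith
  have hid : (88/75) * (1/(a*b))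
      - ((6/5) * ((6/5) * (1/((a+b)*(b+(a+b)))) + 1/(b*(b+(a+b))))
        + ((6/5) * (1/((a+b)*(a+(a+b)))) + 1/(a*(a+(a+b)))))
      = (69*a^2*(b-a) + 91*a*(b-a)^2 + 26*(b-a)^3)
        / (75*(a*(b*((a+b)*((b+(a+b))*(a+(a+b))))))) := by
    field_simp
    ring
  have ht : 0 ≤ b - a := by linarith
  have hnum : 0 ≤ 69*a^2*(b-a) + 91*a*(b-a)^2 + 26*(b-a)^3 := by positivity
  have hden : 0 < 75*(a*(b*((a+b)*((b+(a+b))*(a+(a+b)))))) := by positivity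
  nlinarith [div_nonneg hnum hden.le]

lemma Tsum_decay : ∀ (m : ℕ) (u : ℝ × ℝ), uInv u →
    Tsum u (2*m) ≤ (88/75)^m / (u.1 * u.2) := by
  intro m
  induction m with
  | zero => intro u hu; simp [Tsum]
  | succ m ih =>
      intro u hu
      obtain ⟨ha, hab⟩ := hu
      have hb : 0 < u.2 := lt_of_lt_of_le ha hab
      have e : 2*(m+1) = (2*m) + 1 + 1 := by ring
      rw [e]
      have h00 := ih (us 0 (us 0 u)) (uInv_us 0 (uInv_us 0 ⟨ha, hab⟩))
      have h01 := ih (us 1 (us 0 u)) (uInv_us 1 (uInv_us 0 ⟨ha, hab⟩))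
      have h10 := ih (us 0 (us 1 u)) (uInv_us 0 (uInv_us 1 ⟨ha, hab⟩))
      have h11 := ih (us 1 (us 1 u)) (uInv_us 1 (uInv_us 1 ⟨ha, hab⟩))
      simp only [us] at h00 h01 h10 h11
      have hB : (0:ℝ) ≤ (88/75)^m := by positivity
      have key := key_ineq ha hab
      calc Tsum u (2*m + 1 + 1)
          = (6/5) * ((6/5) * Tsum (us 0 (us 0 u)) (2*m) + Tsum (us 1 (us 0 u)) (2*m))
            + ((6/5) * Tsum (us 0 (us 1 u)) (2*m) + Tsum (us 1 (us 1 u)) (2*m)) := by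
            simp only [Tsum]
        _ ≤ (6/5) * ((6/5) * ((88/75)^m / ((u.1+u.2)*(u.2+(u.1+u.2))))
              + (88/75)^m / (u.2*(u.2+(u.1+u.2))))
            + ((6/5) * ((88/75)^m / ((u.1+u.2)*(u.1+(u.1+u.2))))
              + (88/75)^m / (u.1*(u.1+(u.1+u.2)))) := by
            simp only [us]
            gcongr
        _ = (88/75)^m * ((6/5) * ((6/5) * (1/((u.1+u.2)*(u.2+(u.1+u.2))))
              + 1/(u.2*(u.2+(u.1+u.2))))
            + ((6/5) * (1/((u.1+u.2)*(u.1+(u.1+u.2)))) + 1/(u.1*(u.1+(u.1+u.2))))) := by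
            ring
        _ ≤ (88/75)^m * ((88/75) * (1/(u.1*u.2))) := mul_le_mul_of_nonneg_left key hB
        _ = (88/75)^(m+1) / (u.1 * u.2) := by ring

/-! ### invariants -/

def qInv (q : Q) : Prop :=
  0 ≤ q.a ∧ 0 ≤ q.b ∧ 0 ≤ q.c ∧ 0 ≤ q.d ∧ 1 ≤ q.a + q.c ∧ q.a + q.c ≤ q.b + q.d ∧
    (q.a * q.d - q.b * q.c)^2 = 1

def uq (q : Q) : ℝ × ℝ := (q.a + q.c, q.b + q.d)

lemma uq_qstep (d : Fin 2) (q : Q) : uq (qstep d q) = us d (uq q) := by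
  fin_cases d <;> simp [uq, qstep, us] <;> ring

lemma qInv_qstep (d : Fin 2) {q : Q} (h : qInv q) : qInv (qstep d q) := by
  obtain ⟨h1, h2, h3, h4, h5, h6, h7⟩ := h
  fin_cases d <;>
    refine ⟨by simp [qstep]; linarith, by simp [qstep]; linarith, by simp [qstep]; linarith,
      by simp [qstep]; linarith, by simp [qstep]; linarith, by simp [qstep]; linarith, ?_⟩ <;>
    · simp only [qstep]
      nlinarith [h7]

lemma uInv_uq {q : Q} (h : qInv q) : uInv (uq q) := by
  obtain ⟨h1, h2, h3, h4, h5, h6, h7⟩ := h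
  exact ⟨by simp [uq]; linarith, by simp [uq]; linarith⟩

lemma qInv_q0 : qInv q0 := by
  refine ⟨by norm_num [q0], by norm_num [q0], by norm_num [q0], by norm_num [q0],
    by norm_num [q0], by norm_num [q0], by norm_num [q0]⟩

/-! ### the triangle and its volume -/

def Tri (q : Q) : Set (ℝ × ℝ) :=
  convexHull ℝ (Set.range fun j : Fin 3 => projPt fun k => VM q k j)

lemma subTri_eq (i : ℕ → Fin 2) (n : ℕ) :
    subTri Fe12e i n = Tri (quadFrom q0 i n) := by
  rw [subTri, struct]; rfl

lemma Tri_vol {q : Q} (h : qInv q) :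
    volume (Tri q) ≤ ENNReal.ofReal (1 / ((q.a + q.c) * (q.b + q.d))) := by
  obtain ⟨h1, h2, h3, h4, h5, h6, h7⟩ := h
  have hu1 : (0:ℝ) < q.a + q.c := by linarith
  have hu2 : (0:ℝ) < q.b + q.d := by linarith
  set p : ℝ := q.c / (q.a + q.c) with hp
  set r : ℝ := q.d / (q.b + q.d) with hr
  set L := Matrix.toLin (Module.Basis.finTwoProd ℝ) (Module.Basis.finTwoProd ℝ) !![p-1, r-1; p, r] with hL
  set sq : Set (ℝ × ℝ) := Set.Icc (0:ℝ) 1 ×ˢ Set.Icc (0:ℝ) 1 with hsq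
  have hsub : Tri q ⊆ (fun v => ((1:ℝ),(0:ℝ)) + v) '' (L '' sq) := by
    rw [Tri]
    apply convexHull_min
    · rw [Set.range_subset_iff]
      intro j
      fin_cases j
      · refine ⟨L (1,0), ⟨(1,0), (show _ ∈ sq from ⟨by norm_num, by norm_num⟩), rfl⟩, ?_⟩
        rw [hL, Matrix.toLin_finTwoProd_apply]
        simp only [projPt, VM, Matrix.cons_val', Matrix.cons_val_zero, Matrix.cons_val_one,
          Matrix.head_cons, Matrix.empty_val', Matrix.cons_val_fin_one, Matrix.head_fin_const,
          Matrix.cons_val_two, Matrix.tail_cons]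
        ext <;> simp [Matrix.vecHead, Matrix.vecTail, hp, hr] <;> ring_nf
      · refine ⟨L (0,0), ⟨(0,0), (show _ ∈ sq from ⟨by norm_num, by norm_num⟩), rfl⟩, ?_⟩
        rw [hL, Matrix.toLin_finTwoProd_apply]
        simp only [projPt, VM, Matrix.cons_val', Matrix.cons_val_zero, Matrix.cons_val_one,
          Matrix.head_cons, Matrix.empty_val', Matrix.cons_val_fin_one, Matrix.head_fin_const,
          Matrix.cons_val_two, Matrix.tail_cons]
        ext <;> simp [Matrix.vecHead, Matrix.vecTail]
      · refine ⟨L (0,1), ⟨(0,1), (show _ ∈ sq from ⟨by norm_num, by norm_num⟩), rfl⟩, ?_⟩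
        rw [hL, Matrix.toLin_finTwoProd_apply]
        simp only [projPt, VM, Matrix.cons_val', Matrix.cons_val_zero, Matrix.cons_val_one,
          Matrix.head_cons, Matrix.empty_val', Matrix.cons_val_fin_one, Matrix.head_fin_const,
          Matrix.cons_val_two, Matrix.tail_cons]
        ext <;> simp [Matrix.vecHead, Matrix.vecTail, hp, hr] <;> ring_nf
    · exact (((convex_Icc (0:ℝ) 1).prod (convex_Icc (0:ℝ) 1)).linear_image L).translate _
  have hv1 : volume ((fun v => ((1:ℝ),(0:ℝ)) + v) '' (L '' sq)) = volume (L '' sq) := by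
    rw [Set.image_add_left, measure_preimage_add]
  have hv2 : volume (L '' sq) = ENNReal.ofReal |p - r| * volume sq := by
    rw [hL, Measure.addHaar_image_linearMap, LinearMap.det_toLin, Matrix.det_fin_two_of]
    ring_nf
  have hv3 : volume sq = 1 := by
    rw [hsq, Measure.volume_eq_prod, Measure.prod_prod, Real.volume_Icc]
    norm_num
  have habs : |p - r| = 1 / ((q.a + q.c) * (q.b + q.d)) := by
    have hpr : p - r = (q.c * q.b - q.d * q.a) / ((q.a + q.c) * (q.b + q.d)) := by
      rw [hp, hr]
      field_simp
      ring
    have hone : |q.c * q.b - q.d * q.a| = 1 := by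
      have hz : (q.c * q.b - q.d * q.a - 1) * (q.c * q.b - q.d * q.a + 1) = 0 := by
        nlinarith [h7]
      rcases mul_eq_zero.mp hz with hz | hz
      · rw [abs_of_nonneg (by linarith)]; linarith
      · rw [abs_of_nonpos (by linarith)]; linarith
    rw [hpr, abs_div, hone, abs_of_pos (mul_pos hu1 hu2)]
  calc volume (Tri q) ≤ volume ((fun v => ((1:ℝ),(0:ℝ)) + v) '' (L '' sq)) :=
        measure_mono hsub
    _ = ENNReal.ofReal |p - r| * 1 := by rw [hv1, hv2, hv3]
    _ = ENNReal.ofReal (1 / ((q.a + q.c) * (q.b + q.d))) := by rw [mul_one, habs]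

end S17

namespace S17

/-! ### counting -/

def zc (i : ℕ → Fin 2) (n : ℕ) : ℕ :=
  ((Finset.range n).filter fun k => i (k + 1) = 0).card

lemma zc_succ (i : ℕ → Fin 2) (n : ℕ) :
    zc i (n+1) = zc (fun k => i (k+1)) n + (if i 1 = 0 then 1 else 0) := by
  simp only [zc, Finset.card_filter]
  rw [Finset.sum_range_succ']

lemma zc_add_oc (i : ℕ → Fin 2) (n : ℕ) :
    zc i n + ((Finset.range n).filter fun k => i (k + 1) = 1).card = n := by
  have h : ∀ x : Fin 2, ¬(x = 1) ↔ x = 0 := by decide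
  have H := Finset.card_filter_add_card_filter_not
    (p := fun k => i (k+1) = 1) (s := Finset.range n)
  have he : (Finset.range n).filter (fun a => ¬ i (a+1) = 1)
      = (Finset.range n).filter (fun a => i (a+1) = 0) := by
    apply Finset.filter_congr
    intro x _
    simp [h]
  rw [he, Finset.card_range] at H
  rw [zc, add_comm]
  exact H

/-! ### the bad unions -/

def U : Q → ℕ → ℕ → Set (ℝ × ℝ)
  | q, 0, k => if k = 0 then Tri q else ∅
  | q, n+1, k => U (qstep 0 q) n (k-1) ∪ U (qstep 1 q) n k

lemma fin2cases (x : Fin 2) : x = 0 ∨ x = 1 := by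
  revert x; decide

lemma mem_U : ∀ (n : ℕ) (q : Q) (i : ℕ → Fin 2) (k : ℕ) (z : ℝ × ℝ),
    k ≤ zc i n → z ∈ Tri (quadFrom q i n) → z ∈ U q n k := by
  intro n
  induction n with
  | zero =>
      intro q i k z hk hz
      have hk0 : k = 0 := Nat.le_zero.mp (by simpa [zc] using hk)
      subst hk0
      simpa only [U, if_pos rfl, if_true, quadFrom] using hz
  | succ n ih =>
      intro q i k z hk hz
      rw [zc_succ] at hk
      have hz' : z ∈ Tri (quadFrom (qstep (i 1) q) (fun k => i (k+1)) n) := hz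
      show z ∈ U (qstep 0 q) n (k-1) ∪ U (qstep 1 q) n k
      rcases fin2cases (i 1) with h | h
      · rw [h] at hz' hk
        have hk' : k ≤ zc (fun k => i (k+1)) n + 1 := by simpa using hk
        exact Or.inl (ih (qstep 0 q) _ (k-1) z (by omega) hz')
      · rw [h] at hz' hk
        have hk' : k ≤ zc (fun k => i (k+1)) n := by simpa using hk
        exact Or.inr (ih (qstep 1 q) _ k z (by omega) hz')

lemma volU : ∀ (n : ℕ) (q : Q) (k : ℕ), qInv q →
    volume (U q n k) ≤ ENNReal.ofReal (Tsum (uq q) n / (6/5)^k) := by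
  intro n
  induction n with
  | zero =>
      intro q k h
      by_cases hk : k = 0
      · subst hk
        have h2 := Tri_vol h
        simp only [U, if_pos rfl, pow_zero, div_one]
        simpa [Tsum, uq] using h2
      · simp only [U, if_neg hk, measure_empty]
        exact zero_le
  | succ n ih =>
      intro q k h
      have h0 := ih (qstep 0 q) (k-1) (qInv_qstep 0 h)
      have h1 := ih (qstep 1 q) k (qInv_qstep 1 h)
      rw [uq_qstep] at h0 h1
      have hnn0 : 0 ≤ Tsum (us 0 (uq q)) n := Tsum_nonneg n _ (uInv_us 0 (uInv_uq h))
      have hnn1 : 0 ≤ Tsum (us 1 (uq q)) n := Tsum_nonneg n _ (uInv_us 1 (uInv_uq h))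
      have hzk : (0:ℝ) < (6/5)^k := by positivity
      have hstep : Tsum (us 0 (uq q)) n / (6/5)^(k-1)
          ≤ (6/5) * Tsum (us 0 (uq q)) n / (6/5)^k := by
        cases k with
        | zero =>
            simp only [Nat.zero_sub, pow_zero, div_one]
            nlinarith
        | succ k =>
            rw [Nat.succ_sub_one, pow_succ]
            refine le_of_eq ?_
            have hp : (0:ℝ) < (6/5:ℝ)^k := by positivity
            field_simp
      calc volume (U q (n+1) k)
          ≤ volume (U (qstep 0 q) n (k-1)) + volume (U (qstep 1 q) n k) :=
            measure_union_le _ _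
        _ ≤ ENNReal.ofReal (Tsum (us 0 (uq q)) n / (6/5)^(k-1))
            + ENNReal.ofReal (Tsum (us 1 (uq q)) n / (6/5)^k) := add_le_add h0 h1
        _ ≤ ENNReal.ofReal ((6/5) * Tsum (us 0 (uq q)) n / (6/5)^k)
            + ENNReal.ofReal (Tsum (us 1 (uq q)) n / (6/5)^k) := by
            exact add_le_add (ENNReal.ofReal_le_ofReal hstep) le_rfl
        _ = ENNReal.ofReal (((6/5) * Tsum (us 0 (uq q)) n + Tsum (us 1 (uq q)) n)
              / (6/5)^k) := by
            rw [← ENNReal.ofReal_add (by positivity) (by positivity), ← add_div]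
        _ = ENNReal.ofReal (Tsum (uq q) (n+1) / (6/5)^k) := by
            rw [show Tsum (uq q) (n+1)
              = (6/5) * Tsum (us 0 (uq q)) n + Tsum (us 1 (uq q)) n from rfl]

lemma uq_q0 : uq q0 = (1, 1) := by
  simp [uq, q0]

lemma vol_bad (j : ℕ) :
    volume (U q0 (100*(j+1)) (49*(j+1)))
      ≤ ENNReal.ofReal (((88/75:ℝ)^50 / (6/5)^49)^(j+1)) := by
  have h1 := volU (100*(j+1)) q0 (49*(j+1)) qInv_q0
  have h2 : Tsum (uq q0) (100*(j+1)) ≤ (88/75:ℝ)^(50*(j+1)) := by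
    have e : 100*(j+1) = 2*(50*(j+1)) := by ring
    rw [e, uq_q0]
    have := Tsum_decay (50*(j+1)) (1,1) ⟨one_pos, le_refl _⟩
    simpa using this
  refine le_trans h1 (ENNReal.ofReal_le_ofReal ?_)
  have hzk : (0:ℝ) < (6/5)^(49*(j+1)) := by positivity
  have h3 : Tsum (uq q0) (100*(j+1)) / (6/5)^(49*(j+1))
      ≤ (88/75:ℝ)^(50*(j+1)) / (6/5)^(49*(j+1)) := by
    gcongr
  refine le_trans h3 (le_of_eq ?_)
  rw [pow_mul, pow_mul, ← div_pow]

end S17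

open S17 in
/-- The set of points of the open triangle Δ = {1 > x > y > 0} possessing a normal
Farey (e,12,e) TRIP sequence (frequency of ones tending to 1/2) has Lebesgue measure
zero. -/
theorem stmt17 :
    volume {z : ℝ × ℝ | (z.2 < z.1 ∧ z.1 < 1 ∧ 0 < z.2) ∧
      ∃ i : ℕ → Fin 2,
        (∀ n : ℕ, 1 ≤ n → z ∈ subTri Fe12e i n) ∧
        Tendsto
          (fun n : ℕ =>
            (((Finset.range n).filter fun k => i (k + 1) = 1).card : ℝ) / n)
          atTop (nhds (1 / 2))} = 0 := by
  set rr : ℝ := (88/75)^50 / (6/5)^49 with hrr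
  have hr0 : (0:ℝ) ≤ rr := by positivity
  have hr1 : rr < 1 := by
    rw [hrr, div_lt_one (by positivity)]
    norm_num
  set NullSet : Set (ℝ × ℝ) :=
    ⋃ M : ℕ, ⋂ j : ℕ, ⋂ (_ : M ≤ j), U q0 (100*(j+1)) (49*(j+1)) with hNS
  have hNull : volume NullSet = 0 := by
    rw [hNS]
    refine measure_iUnion_null fun M => ?_
    have hb : ∀ᶠ j in atTop,
        volume (⋂ j : ℕ, ⋂ (_ : M ≤ j), U q0 (100*(j+1)) (49*(j+1)))
          ≤ ENNReal.ofReal (rr^(j+1)) := by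
      refine eventually_atTop.mpr ⟨M, fun j hj => ?_⟩
      refine le_trans (measure_mono (Set.iInter₂_subset j hj)) ?_
      exact vol_bad j
    have htend : Tendsto (fun j : ℕ => ENNReal.ofReal (rr^(j+1))) atTop (nhds 0) := by
      rw [← ENNReal.ofReal_zero]
      apply ENNReal.tendsto_ofReal
      exact (tendsto_pow_atTop_nhds_zero_of_lt_one hr0 hr1).comp (tendsto_add_atTop_nat 1)
    exact le_antisymm (ge_of_tendsto htend hb) zero_le
  refine measure_mono_null ?_ hNull
  rintro z ⟨⟨hzy, hx1, hy0⟩, i, hmem, htend⟩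
  have h51 : ∀ᶠ n in atTop,
      (((Finset.range n).filter fun k => i (k + 1) = 1).card : ℝ) / n < 51/100 :=
    htend.eventually_lt_const (by norm_num)
  obtain ⟨N₀, hN₀⟩ := eventually_atTop.mp h51
  rw [hNS]
  refine Set.mem_iUnion.mpr ⟨N₀, Set.mem_iInter.mpr fun j => Set.mem_iInter.mpr fun hj => ?_⟩
  have hn : N₀ ≤ 100*(j+1) := by omega
  have hcard := hN₀ (100*(j+1)) hn
  have hnpos : (0:ℝ) < ((100*(j+1) : ℕ) : ℝ) := by positivity
  have hones : ((((Finset.range (100*(j+1))).filter fun k => i (k+1) = 1).card : ℕ) : ℝ)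
      < ((51*(j+1) : ℕ) : ℝ) := by
    rw [div_lt_iff₀ hnpos] at hcard
    calc ((((Finset.range (100*(j+1))).filter fun k => i (k+1) = 1).card : ℕ) : ℝ)
        < 51/100 * ((100*(j+1) : ℕ) : ℝ) := hcard
      _ = ((51*(j+1) : ℕ) : ℝ) := by push_cast; ring
  have honesN : (((Finset.range (100*(j+1))).filter fun k => i (k+1) = 1).card : ℕ)
      < 51*(j+1) := by exact_mod_cast hones
  have hzc : 49*(j+1) ≤ zc i (100*(j+1)) := by
    have := zc_add_oc i (100*(j+1))
    omega
  refine mem_U (100*(j+1)) q0 i (49*(j+1)) z hzc ?_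
  rw [← subTri_eq]
  exact hmem (100*(j+1)) (by omega)
end
end

section
/- The four TRIP maps given by the matrix pairs (A₀,A₁), (A₀,B₁), (B₀,A₁) and (B₀,B₁) — where A₀ has rows (0,1,0),(1,0,0),(0,1,1), B₀ has rows (0,1,0),(0,0,1),(1,1,0), A₁ has rows (1,1,0),(0,0,1),(0,1,0) and B₁ has rows (0,1,1),(1,0,0),(0,1,0) (these are the triples (e,23,23), (e,23,132), (e,132,23), (e,132,132)) — all give the same partition of the triangle: for every n ≥ 1, the family of subtriangles {convex hull of the π-images of the columns of V·C_{i₁}⋯C_{iₙ} : (i₁,…,iₙ) ∈ {0,1}ⁿ}, where C_{i} denotes the relevant 0-matrix or 1-matrix of the pair, is the same set of subsets of ℝ² for all four pairs. -/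
open Matrix MeasureTheory Filter

noncomputable section

/-- The level-n partition of the triangle determined by a pair of matrices. -/
def partitionAt (C : Fin 2 → Matrix (Fin 3) (Fin 3) ℝ) (n : ℕ) : Set (Set (ℝ × ℝ)) :=
  {T : Set (ℝ × ℝ) | ∃ i : ℕ → Fin 2, T = subTri C i n}

/-- The 0-matrix of (e,23,23) and (e,23,132). -/
def A0 : Matrix (Fin 3) (Fin 3) ℝ := !![0,1,0; 1,0,0; 0,1,1]
/-- The 0-matrix of (e,132,23) and (e,132,132). -/
def B0 : Matrix (Fin 3) (Fin 3) ℝ := !![0,1,0; 0,0,1; 1,1,0]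
/-- The 1-matrix of (e,23,23) and (e,132,23). -/
def A1 : Matrix (Fin 3) (Fin 3) ℝ := !![1,1,0; 0,0,1; 0,1,0]
/-- The 1-matrix of (e,23,132) and (e,132,132). -/
def B1 : Matrix (Fin 3) (Fin 3) ℝ := !![0,1,1; 1,0,0; 0,1,0]

/-- The permutation matrix swapping coordinates 0 and 2. -/
def Pm : Matrix (Fin 3) (Fin 3) ℝ := !![0,0,1; 0,1,0; 1,0,0]

/-- Powers of `Pm` indexed by `Fin 2`. -/
def Pw : Fin 2 → Matrix (Fin 3) (Fin 3) ℝ := ![1, Pm]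

abbrev AAmat : Fin 2 → Matrix (Fin 3) (Fin 3) ℝ := ![A0, A1]

lemma Pw_mul (a b : Fin 2) : Pw a * Pw b = Pw (a + b) := by
  fin_cases a <;> fin_cases b <;>
    · ext i j
      fin_cases i <;> fin_cases j <;>
        simp [Pw, Matrix.mul_apply, Fin.sum_univ_succ, Pm, Matrix.one_apply,
          Matrix.vecHead, Matrix.vecTail]

lemma Pw_conj (a b : Fin 2) : Pw a * AAmat b * Pw a = AAmat (b + a) := by
  fin_cases a <;> fin_cases b <;>
    · show _ = _
      ext i j
      fin_cases i <;> fin_cases j <;>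
        simp [Pw, Matrix.mul_apply, Fin.sum_univ_succ, Pm, A0, A1, Matrix.one_apply,
          Matrix.vecHead, Matrix.vecTail]

lemma Pw_swap (a b : Fin 2) : Pw a * AAmat b = AAmat (b + a) * Pw a := by
  have h := Pw_conj a b
  have h2 : Pw a * Pw a = 1 := by rw [Pw_mul]; fin_cases a <;> simp [Pw]
  calc Pw a * AAmat b = Pw a * AAmat b * (Pw a * Pw a) := by rw [h2, mul_one]
    _ = (Pw a * AAmat b * Pw a) * Pw a := by rw [mul_assoc (Pw a * AAmat b)]
    _ = AAmat (b + a) * Pw a := by rw [h]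

/-- Running parity of the `P`-contributions. -/
def Spar (p : Fin 2 → Fin 2) (i : ℕ → Fin 2) : ℕ → Fin 2
  | 0 => 0
  | n + 1 => Spar p i n + p (i (n + 1))

/-- The reindexing map on sequences. -/
def Fmap (p : Fin 2 → Fin 2) (i : ℕ → Fin 2) : ℕ → Fin 2 :=
  fun k => i k + Spar p i (k - 1)

lemma key (p : Fin 2 → Fin 2) (i : ℕ → Fin 2) :
    ∀ n, prodSeq (fun b => AAmat b * Pw (p b)) i n
      = prodSeq AAmat (Fmap p i) n * Pw (Spar p i n)
  | 0 => by simp [prodSeq, Spar, Pw]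
  | n + 1 => by
    have hj : Fmap p i (n + 1) = i (n + 1) + Spar p i n := by
      simp [Fmap]
    show prodSeq (fun b => AAmat b * Pw (p b)) i n * (AAmat (i (n+1)) * Pw (p (i (n+1)))) = _
    rw [key p i n]
    show _ = prodSeq AAmat (Fmap p i) n * AAmat (Fmap p i (n+1)) * Pw (Spar p i n + p (i (n+1)))
    rw [hj, ← Pw_mul]
    have hs := Pw_swap (Spar p i n) (i (n + 1))
    simp only [mul_assoc]
    rw [← mul_assoc (Pw (Spar p i n)), hs, mul_assoc]

/-- Right multiplication by `Pm` permutes the columns, so the set of projected columns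
is unchanged. -/
lemma range_col_perm (N : Matrix (Fin 3) (Fin 3) ℝ) :
    (Set.range fun j : Fin 3 => projPt fun k => (N * Pm) k j) =
    Set.range fun j : Fin 3 => projPt fun k => N k j := by
  have h : ∀ j : Fin 3, (fun k => (N * Pm) k j) = fun k => N k ((![2,1,0] : Fin 3 → Fin 3) j) := by
    intro j
    funext k
    fin_cases j <;> simp [Matrix.mul_apply, Fin.sum_univ_succ, Pm]
  have hp : ∀ j : Fin 3,
      projPt (fun k => (N * Pm) k j) = projPt (fun k => N k ((![2,1,0] : Fin 3 → Fin 3) j)) :=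
    fun j => by rw [h j]
  ext x
  constructor
  · rintro ⟨j, rfl⟩
    exact ⟨(![2,1,0] : Fin 3 → Fin 3) j, (hp j).symm⟩
  · rintro ⟨j, rfl⟩
    refine ⟨(![2,1,0] : Fin 3 → Fin 3) j, ?_⟩
    show projPt (fun k => (N * Pm) k ((![2,1,0] : Fin 3 → Fin 3) j)) = projPt fun k => N k j
    rw [hp]
    congr 1
    funext k
    congr 1
    fin_cases j <;> rfl

lemma subTri_eq (p : Fin 2 → Fin 2) (i : ℕ → Fin 2) (n : ℕ) :
    subTri (fun b => AAmat b * Pw (p b)) i n = subTri AAmat (Fmap p i) n := by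
  unfold subTri
  congr 1
  rw [key, ← mul_assoc]
  generalize Spar p i n = s
  fin_cases s
  · simp [Pw]
  · show (Set.range fun j : Fin 3 => projPt fun k => (Vmat * prodSeq AAmat (Fmap p i) n * Pm) k j) = _
    exact range_col_perm _

/-- The data for the inverse of `Fmap`: the sequence together with the running parity. -/
def GT (p : Fin 2 → Fin 2) (j : ℕ → Fin 2) : ℕ → Fin 2 × Fin 2
  | 0 => (j 0, 0)
  | k + 1 =>
    ((j (k+1)) + (GT p j k).2, (GT p j k).2 + p (j (k+1) + (GT p j k).2))

def Ginv (p : Fin 2 → Fin 2) (j : ℕ → Fin 2) : ℕ → Fin 2 := fun k => (GT p j k).1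

lemma Spar_GT (p : Fin 2 → Fin 2) (j : ℕ → Fin 2) :
    ∀ n, Spar p (Ginv p j) n = (GT p j n).2
  | 0 => rfl
  | n + 1 => by
    show Spar p (Ginv p j) n + p (Ginv p j (n+1)) = _
    rw [Spar_GT p j n]
    rfl

lemma add2 : ∀ a b : Fin 2, a + b + b = a := by decide

lemma Fmap_Ginv (p : Fin 2 → Fin 2) (j : ℕ → Fin 2) : Fmap p (Ginv p j) = j := by
  funext k
  cases k with
  | zero => simp [Fmap, Ginv, GT, Spar]
  | succ n =>
    show Ginv p j (n+1) + Spar p (Ginv p j) n = j (n+1)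
    rw [Spar_GT]
    show j (n+1) + (GT p j n).2 + (GT p j n).2 = j (n+1)
    exact add2 _ _

lemma part_eq (p : Fin 2 → Fin 2) (n : ℕ) :
    partitionAt (fun b => AAmat b * Pw (p b)) n = partitionAt AAmat n := by
  ext T
  constructor
  · rintro ⟨i, rfl⟩
    exact ⟨Fmap p i, subTri_eq p i n⟩
  · rintro ⟨j, rfl⟩
    exact ⟨Ginv p j, by rw [subTri_eq, Fmap_Ginv]⟩

lemma hAB : ![A0, B1] = fun b => AAmat b * Pw ((![0,1] : Fin 2 → Fin 2) b) := by
  funext b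
  fin_cases b <;>
    · show _ = _
      ext i j
      fin_cases i <;> fin_cases j <;>
        simp [Pw, Matrix.mul_apply, Fin.sum_univ_succ, Pm, A0, A1, B0, B1, Matrix.one_apply,
          Matrix.vecHead, Matrix.vecTail]

lemma hBA : ![B0, A1] = fun b => AAmat b * Pw ((![1,0] : Fin 2 → Fin 2) b) := by
  funext b
  fin_cases b <;>
    · show _ = _
      ext i j
      fin_cases i <;> fin_cases j <;>
        simp [Pw, Matrix.mul_apply, Fin.sum_univ_succ, Pm, A0, A1, B0, B1, Matrix.one_apply,
          Matrix.vecHead, Matrix.vecTail]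

lemma hBB : ![B0, B1] = fun b => AAmat b * Pw ((![1,1] : Fin 2 → Fin 2) b) := by
  funext b
  fin_cases b <;>
    · show _ = _
      ext i j
      fin_cases i <;> fin_cases j <;>
        simp [Pw, Matrix.mul_apply, Fin.sum_univ_succ, Pm, A0, A1, B0, B1, Matrix.one_apply,
          Matrix.vecHead, Matrix.vecTail, Fin.ext_iff]

/-- The TRIP maps (e,23,23), (e,23,132), (e,132,23), (e,132,132) give the same
partition of the triangle at every level. -/
theorem stmt18 : ∀ n : ℕ, 1 ≤ n →
    partitionAt ![A0, A1] n = partitionAt ![A0, B1] n ∧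
    partitionAt ![A0, A1] n = partitionAt ![B0, A1] n ∧
    partitionAt ![A0, A1] n = partitionAt ![B0, B1] n := by
  intro n _
  refine ⟨?_, ?_, ?_⟩
  · rw [hAB, part_eq]
  · rw [hBA, part_eq]
  · rw [hBB, part_eq]
end
end
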